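/- Let G = K_1 ∨ (C_{k_1} ∪ C_{k_2} ∪ ⋯ ∪ C_{k_t} ∪ qK_2 ∪ sK_1) with t, q, s ≥ 1 and k_i ≥ 3 for 1 ≤ i ≤ t, and let n be the order of G. Then Σ_{uv ∈ E(G)} d_G(u)·d_G(v) = 3(n+2)(n−1−2q) + 4qn − s(2n+7), where the sum runs over all edges uv of G and d_G denotes vertex degree. -/

import Mathlib

open SimpleGraph Finset

namespace Paper

/-- The cone `K₁ ∨ G`: a new apex vertex (`none`) joined to every vertex of `G`. -/
def cone {V : Type*} (G : SimpleGraph V) : SimpleGraph (Option V) where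
  Adj x y :=
    match x, y with
    | none, none => False
    | none, some _ => True
    | some _, none => True
    | some a, some b => G.Adj a b
  symm := by
    refine ⟨?_⟩
    rintro (_ | a) (_ | b) h
    · exact h
    · exact trivial
    · exact trivial
    · exact G.symm.symm _ _ h
  loopless := by
    refine ⟨?_⟩
    rintro (_ | a) h
    · exact h
    · exact G.loopless.irrefl a h

/-- Disjoint union of an indexed family of graphs. -/
def sigmaGraph {ι : Type*} {V : ι → Type*} (G : ∀ i, SimpleGraph (V i)) :
    SimpleGraph (Σ i, V i) where
  Adj x y := ∃ (i : ι) (u v : V i), x = ⟨i, u⟩ ∧ y = ⟨i, v⟩ ∧ (G i).Adj u v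
  symm := by
    refine ⟨?_⟩
    rintro x y ⟨i, u, v, rfl, rfl, h⟩
    exact ⟨i, v, u, rfl, rfl, (G i).symm.symm _ _ h⟩
  loopless := by
    refine ⟨?_⟩
    rintro x ⟨i, u, v, rfl, h2, h⟩
    injection h2 with h3 h4
    subst h4
    exact (G i).loopless.irrefl u h

/-- `q` disjoint copies of `K₂`. -/
def K2s (q : ℕ) : SimpleGraph (Σ _ : Fin q, Fin 2) :=
  sigmaGraph fun _ => (⊤ : SimpleGraph (Fin 2))

/-- The signless Laplacian matrix `Q(G) = D(G) + A(G)`. -/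
noncomputable def QMatrix {V : Type*} [Fintype V] (G : SimpleGraph V) : Matrix V V ℝ :=
  letI := Classical.decEq V
  letI := Classical.decRel G.Adj
  Matrix.diagonal (fun v => (G.degree v : ℝ)) + G.adjMatrix ℝ

/-- The signless Laplacian spectrum, as the multiset of roots of the characteristic
polynomial of `Q(G)` (with multiplicity). -/
noncomputable def Qspectrum {V : Type*} [Fintype V] (G : SimpleGraph V) : Multiset ℝ :=
  letI := Classical.decEq V
  (QMatrix G).charpoly.roots

/-- Multiplicity of `ρ` as a signless Laplacian eigenvalue of `G`. -/
noncomputable def Qmult {V : Type*} [Fintype V] (G : SimpleGraph V) (ρ : ℝ) : ℕ :=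
  (Qspectrum G).count ρ

/-- The `i`-th largest signless Laplacian eigenvalue (1-indexed), i.e. `χ_i(G)`. -/
noncomputable def Qeig {V : Type*} [Fintype V] (G : SimpleGraph V) (i : ℕ) : ℝ :=
  (((Qspectrum G).sort (· ≤ ·)).reverse).getD (i - 1) 0

/-- `G` is determined by its signless Laplacian spectrum. -/
def IsDQS {V : Type*} [Fintype V] (G : SimpleGraph V) : Prop :=
  ∀ (W : Type) [Fintype W] (F : SimpleGraph W),
    Qspectrum F = Qspectrum G → Nonempty (F ≃g G)

/-- The number of subgraphs of `G` isomorphic to `H`. -/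
noncomputable def subgraphCount {V W : Type*} (G : SimpleGraph V) (H : SimpleGraph W) : ℕ :=
  Nat.card {H' : G.Subgraph // Nonempty (H'.coe ≃g H)}

/-- The number of triangle subgraphs of `G` containing a vertex `v`. -/
noncomputable def triangleCountAt {V : Type*} (G : SimpleGraph V) (v : V) : ℕ :=
  Nat.card {H' : G.Subgraph //
    v ∈ H'.verts ∧ Nonempty (H'.coe ≃g (⊤ : SimpleGraph (Fin 3)))}

/-- Vertex degree (with classical decidability). -/
noncomputable def deg {V : Type*} [Fintype V] (G : SimpleGraph V) (v : V) : ℕ :=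
  letI := Classical.decRel G.Adj
  G.degree v

/-- The multiset of vertex degrees of `G`. -/
noncomputable def degreeMultiset {V : Type*} [Fintype V] (G : SimpleGraph V) : Multiset ℕ :=
  (Finset.univ : Finset V).val.map fun v => deg G v

/-- The maximum vertex degree of `G`. -/
noncomputable def maxDeg {V : Type*} [Fintype V] (G : SimpleGraph V) : ℕ :=
  letI := Classical.decRel G.Adj
  G.maxDegree

/-- `S_r(G) = trace(A(G)^r)`, the `r`-th spectral moment. -/
noncomputable def Smoment {V : Type*} [Fintype V] (G : SimpleGraph V) (r : ℕ) : ℝ :=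
  letI := Classical.decEq V
  letI := Classical.decRel G.Adj
  ((G.adjMatrix ℝ) ^ r).trace

/-- `T_r(G) = trace(Q(G)^r)`, the `r`-th signless Laplacian spectral moment. -/
noncomputable def Tmoment {V : Type*} [Fintype V] (G : SimpleGraph V) (r : ℕ) : ℝ :=
  letI := Classical.decEq V
  ((QMatrix G) ^ r).trace

/-- `∑_{uv ∈ E(G)} d_G(u) d_G(v)`. -/
noncomputable def edgeDegSum {V : Type*} [Fintype V] (G : SimpleGraph V) : ℕ :=
  letI := Classical.decEq V
  letI := Classical.decRel G.Adj
  ∑ e ∈ G.edgeFinset,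
    Sym2.lift ⟨fun u v => G.degree u * G.degree v, fun _ _ => Nat.mul_comm _ _⟩ e

/-- The coalescence of `G` at `v` with the apex of `K₁ ∨ r K₂`: add `2r` new vertices
`a_i, b_i` and edges `a_i b_i`, `v a_i`, `v b_i`. -/
def coalescenceK2s {V : Type*} (G : SimpleGraph V) (v : V) (r : ℕ) :
    SimpleGraph (V ⊕ (Fin r × Fin 2)) where
  Adj x y :=
    match x, y with
    | Sum.inl a, Sum.inl b => G.Adj a b
    | Sum.inl a, Sum.inr _ => a = v
    | Sum.inr _, Sum.inl b => b = v
    | Sum.inr p, Sum.inr p' => p.1 = p'.1 ∧ p.2 ≠ p'.2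
  symm := by
    refine ⟨?_⟩
    rintro (a | p) (b | p') h
    · exact G.symm.symm _ _ h
    · exact h
    · exact h
    · exact ⟨h.1.symm, h.2.symm⟩
  loopless := by
    refine ⟨?_⟩
    rintro (a | p) h
    · exact G.loopless.irrefl a h
    · exact h.2 rfl


/-- `K₁ ∨ (C_{k 0} ∪ ⋯ ∪ C_{k (t-1)} ∪ q K₂ ∪ s K₁)`. -/
def coneCycles {t : ℕ} (k : Fin t → ℕ) (q s : ℕ) :
    SimpleGraph (Option ((Σ i, Fin (k i)) ⊕ ((Σ _ : Fin q, Fin 2) ⊕ Fin s))) :=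
  cone ((sigmaGraph fun i => cycleGraph (k i)) ⊕g (K2s q ⊕g (⊥ : SimpleGraph (Fin s))))

/-- `K₁ ∨ (C_k ∪ q K₂ ∪ s K₁)`. -/
def coneOneCycle (k q s : ℕ) :
    SimpleGraph (Option (Fin k ⊕ ((Σ _ : Fin q, Fin 2) ⊕ Fin s))) :=
  cone (cycleGraph k ⊕g (K2s q ⊕g (⊥ : SimpleGraph (Fin s))))

/-- `K₁ ∨ (C₄ ∪ P_{k-3} ∪ P₃ ∪ (q-2) K₂ ∪ s K₁)`. -/
def coneAlt (k q s : ℕ) :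
    SimpleGraph (Option (Fin 4 ⊕ (Fin (k - 3) ⊕ (Fin 3 ⊕ ((Σ _ : Fin (q - 2), Fin 2) ⊕ Fin s))))) :=
  cone (cycleGraph 4 ⊕g (pathGraph (k - 3) ⊕g (pathGraph 3 ⊕g
    (K2s (q - 2) ⊕g (⊥ : SimpleGraph (Fin s))))))

/-- `K₁ ∨ (C₃ ∪ C_{k 0} ∪ ⋯ ∪ C_{k (t'-1)} ∪ q K₂ ∪ s K₁)`. -/
def coneC3Cycles {t' : ℕ} (k : Fin t' → ℕ) (q s : ℕ) :
    SimpleGraph (Option (Fin 3 ⊕ ((Σ i, Fin (k i)) ⊕ ((Σ _ : Fin q, Fin 2) ⊕ Fin s)))) :=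
  cone (cycleGraph 3 ⊕g ((sigmaGraph fun i => cycleGraph (k i)) ⊕g
    (K2s q ⊕g (⊥ : SimpleGraph (Fin s)))))

/-- `K₁ ∨ (K_{1,3} ∪ C_{k 0} ∪ ⋯ ∪ C_{k (t'-1)} ∪ q K₂ ∪ s' K₁)`. -/
def coneStar {t' : ℕ} (k : Fin t' → ℕ) (q s' : ℕ) :
    SimpleGraph (Option ((Fin 1 ⊕ Fin 3) ⊕ ((Σ i, Fin (k i)) ⊕ ((Σ _ : Fin q, Fin 2) ⊕ Fin s')))) :=
  cone (completeBipartiteGraph (Fin 1) (Fin 3) ⊕g ((sigmaGraph fun i => cycleGraph (k i)) ⊕g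
    (K2s q ⊕g (⊥ : SimpleGraph (Fin s')))))

/-- `K₁ ∨ (P_{l 0} ∪ ⋯ ∪ P_{l (q-1)} ∪ s K₁)`. -/
def conePaths {q : ℕ} (l : Fin q → ℕ) (s : ℕ) :
    SimpleGraph (Option ((Σ i, Fin (l i)) ⊕ Fin s)) :=
  cone ((sigmaGraph fun i => pathGraph (l i)) ⊕g (⊥ : SimpleGraph (Fin s)))

/-- `K₁ ∨ (C_{k 0} ∪ ⋯ ∪ C_{k (z-1)} ∪ P_{l 0} ∪ ⋯ ∪ P_{l (q-1)} ∪ s K₁)`. -/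
def coneCyclesPaths {z q : ℕ} (k : Fin z → ℕ) (l : Fin q → ℕ) (s : ℕ) :
    SimpleGraph (Option ((Σ i, Fin (k i)) ⊕ ((Σ i, Fin (l i)) ⊕ Fin s))) :=
  cone ((sigmaGraph fun i => cycleGraph (k i)) ⊕g
    ((sigmaGraph fun i => pathGraph (l i)) ⊕g (⊥ : SimpleGraph (Fin s))))

/-- The quartic polynomial `p_{n,q,s}` from the paper. -/
noncomputable def quartic (n q s : ℕ) (x : ℝ) : ℝ :=
  x ^ 4 - ((n : ℝ) + 8) * x ^ 3 + (8 * (n : ℝ) + 15) * x ^ 2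
    + (4 * (q : ℝ) + 4 * (s : ℝ) - 19 * (n : ℝ) + 4) * x
    + (12 * (n : ℝ) - 4 * (q : ℝ) - 12 * (s : ℝ) - 12)

/-- The multiset `{3 + 2 cos (2jπ/k_i) : 1 ≤ j ≤ k_i - 1, 1 ≤ i ≤ t}`. -/
noncomputable def cycleEigs {t : ℕ} (k : Fin t → ℕ) : Multiset ℝ :=
  ∑ i : Fin t, (Multiset.range (k i - 1)).map
    (fun j => 3 + 2 * Real.cos (2 * ((j : ℝ) + 1) * Real.pi / (k i : ℝ)))


section Aux

variable {V : Type*}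

@[simp] lemma cone_adj_none_some (G : SimpleGraph V) (a : V) :
    (cone G).Adj none (some a) := trivial

@[simp] lemma cone_adj_some_none (G : SimpleGraph V) (a : V) :
    (cone G).Adj (some a) none := trivial

@[simp] lemma cone_adj_none_none (G : SimpleGraph V) :
    ¬ (cone G).Adj none none := id

@[simp] lemma cone_adj_some_some (G : SimpleGraph V) (a b : V) :
    (cone G).Adj (some a) (some b) ↔ G.Adj a b := Iff.rfl

@[simp] lemma sigmaGraph_adj_same {ι : Type*} {W : ι → Type*} (G : ∀ i, SimpleGraph (W i))
    {i : ι} {u v : W i} : (sigmaGraph G).Adj ⟨i, u⟩ ⟨i, v⟩ ↔ (G i).Adj u v := by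
  constructor
  · rintro ⟨j, a, b, h1, h2, h⟩
    obtain ⟨rfl, h1⟩ := Sigma.mk.inj_iff.mp h1
    obtain ⟨-, h2⟩ := Sigma.mk.inj_iff.mp h2
    rw [eq_of_heq h1, eq_of_heq h2]
    exact h
  · intro h
    exact ⟨i, u, v, rfl, rfl, h⟩

lemma sigmaGraph_adj_ne {ι : Type*} {W : ι → Type*} (G : ∀ i, SimpleGraph (W i))
    {i j : ι} (hij : i ≠ j) {u : W i} {v : W j} :
    ¬ (sigmaGraph G).Adj ⟨i, u⟩ ⟨j, v⟩ := by
  rintro ⟨l, a, b, h1, h2, h⟩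
  obtain ⟨rfl, -⟩ := Sigma.mk.inj_iff.mp h1
  obtain ⟨rfl, -⟩ := Sigma.mk.inj_iff.mp h2
  exact hij rfl

@[simp] lemma sum_adj_inl_inl {α β : Type*} (G : SimpleGraph α) (H : SimpleGraph β)
    (a b : α) : (G ⊕g H).Adj (Sum.inl a) (Sum.inl b) ↔ G.Adj a b := Iff.rfl

@[simp] lemma sum_adj_inr_inr {α β : Type*} (G : SimpleGraph α) (H : SimpleGraph β)
    (a b : β) : (G ⊕g H).Adj (Sum.inr a) (Sum.inr b) ↔ H.Adj a b := Iff.rfl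

@[simp] lemma sum_adj_inl_inr {α β : Type*} (G : SimpleGraph α) (H : SimpleGraph β)
    (a : α) (b : β) : ¬ (G ⊕g H).Adj (Sum.inl a) (Sum.inr b) := by
  intro h
  simpa using h

@[simp] lemma sum_adj_inr_inl {α β : Type*} (G : SimpleGraph α) (H : SimpleGraph β)
    (a : α) (b : β) : ¬ (G ⊕g H).Adj (Sum.inr b) (Sum.inl a) := by
  intro h
  simpa using h

/-- degree as a sum of indicators -/
lemma degree_eq_sum [Fintype V] (G : SimpleGraph V) [DecidableRel G.Adj] (u : V) :
    G.degree u = ∑ v, (if G.Adj u v then 1 else 0) := by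
  rw [SimpleGraph.degree, neighborFinset_eq_filter, ← Finset.sum_filter]
  simp

lemma sum_ite_adj_const [Fintype V] (G : SimpleGraph V) [DecidableRel G.Adj]
    (u : V) (c : ℕ) : ∑ v, (if G.Adj u v then c else 0) = c * G.degree u := by
  rw [degree_eq_sum, Finset.mul_sum]
  exact Finset.sum_congr rfl (fun v _ => by split <;> simp)

lemma degree_sigmaGraph {ι : Type*} [Fintype ι] [DecidableEq ι] {W : ι → Type*}
    [∀ i, Fintype (W i)] (G : ∀ i, SimpleGraph (W i)) [∀ i, DecidableRel (G i).Adj]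
    [DecidableRel (sigmaGraph G).Adj] (i : ι) (u : W i) :
    (sigmaGraph G).degree ⟨i, u⟩ = (G i).degree u := by
  rw [degree_eq_sum, degree_eq_sum]
  rw [← Finset.univ_sigma_univ, Finset.sum_sigma]
  rw [Finset.sum_eq_single i]
  · exact Finset.sum_congr rfl (fun v _ => by simp only [sigmaGraph_adj_same])
  · intro j _ hj
    exact Finset.sum_eq_zero (fun v _ => by rw [if_neg (sigmaGraph_adj_ne G (Ne.symm hj))])
  · intro h
    exact absurd (Finset.mem_univ i) h

lemma degree_cone_none [Fintype V] (G : SimpleGraph V)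
    [DecidableRel (cone G).Adj] : (cone G).degree none = Fintype.card V := by
  rw [degree_eq_sum, Fintype.sum_option]
  simp [Finset.card_univ]

lemma degree_cone_some [Fintype V] (G : SimpleGraph V) [DecidableRel G.Adj]
    [DecidableRel (cone G).Adj] (a : V) : (cone G).degree (some a) = G.degree a + 1 := by
  rw [degree_eq_sum, Fintype.sum_option, degree_eq_sum]
  rw [if_pos (cone_adj_some_none G a), Nat.add_comm]
  congr 1
  exact Finset.sum_congr rfl (fun v _ => by rw [if_congr (cone_adj_some_some G a v) rfl rfl])

lemma degree_sum_inl {α β : Type*} [Fintype α] [Fintype β] (G : SimpleGraph α)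
    (H : SimpleGraph β) [DecidableRel G.Adj] [DecidableRel (G ⊕g H).Adj] (a : α) :
    (G ⊕g H).degree (Sum.inl a) = G.degree a := by
  rw [degree_eq_sum, Fintype.sum_sum_type, degree_eq_sum]
  have h2 : ∀ b : β, (if (G ⊕g H).Adj (Sum.inl a) (Sum.inr b) then 1 else 0) = 0 := by
    intro b; simp
  rw [Finset.sum_congr rfl (fun b _ => h2 b)]
  simp only [Finset.sum_const_zero, Nat.add_zero]
  exact Finset.sum_congr rfl (fun v _ => by split <;> simp_all)

lemma degree_sum_inr {α β : Type*} [Fintype α] [Fintype β] (G : SimpleGraph α)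
    (H : SimpleGraph β) [DecidableRel H.Adj] [DecidableRel (G ⊕g H).Adj] (b : β) :
    (G ⊕g H).degree (Sum.inr b) = H.degree b := by
  rw [degree_eq_sum, Fintype.sum_sum_type, degree_eq_sum]
  have h2 : ∀ a : α, (if (G ⊕g H).Adj (Sum.inr b) (Sum.inl a) then 1 else 0) = 0 := by
    intro a; simp
  rw [Finset.sum_congr rfl (fun a _ => h2 a)]
  simp only [Finset.sum_const_zero, Nat.zero_add]
  exact Finset.sum_congr rfl (fun v _ => by split <;> simp_all)

lemma degree_cycleGraph' {m : ℕ} (hm : 3 ≤ m) (v : Fin m) :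
    (cycleGraph m).degree v = 2 := by
  obtain ⟨m', rfl⟩ : ∃ m', m = m' + 3 := ⟨m - 3, by omega⟩
  exact cycleGraph_degree_three_le

lemma double_count [Fintype V] [DecidableEq V] (G : SimpleGraph V) [DecidableRel G.Adj]
    (f : V → V → ℕ) (hf : ∀ a b, f a b = f b a) :
    ∑ u, ∑ v, (if G.Adj u v then f u v else 0)
      = 2 * ∑ e ∈ G.edgeFinset, Sym2.lift ⟨f, hf⟩ e := by
  have h1 : ∑ u, ∑ v, (if G.Adj u v then f u v else 0)
      = ∑ p ∈ (univ ×ˢ univ).filter (fun p : V × V => G.Adj p.1 p.2), f p.1 p.2 := by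
    rw [Finset.sum_filter, Finset.sum_product]
  rw [h1, ← Finset.sum_fiberwise_of_maps_to (g := fun p : V × V => Sym2.mk p.1 p.2)
    (t := G.edgeFinset) (fun p hp => by
      simp only [mem_filter] at hp
      simpa [mem_edgeFinset] using hp.2)]
  rw [Finset.mul_sum]
  refine Finset.sum_congr rfl ?_
  intro e he
  rw [mem_edgeFinset] at he
  induction e with
  | _ u v =>
    have hadj : G.Adj u v := he
    have hne : u ≠ v := hadj.ne
    have hset : ((univ ×ˢ univ).filter (fun p : V × V => G.Adj p.1 p.2)).filter
        (fun p => Sym2.mk p.1 p.2 = s(u, v)) = {(u, v), (v, u)} := by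
      ext ⟨a, b⟩
      simp only [mem_filter, mem_product, mem_univ, true_and, Sym2.eq, Sym2.rel_iff,
        Prod.mk.injEq, mem_insert, mem_singleton, Prod.swap_prod_mk]
      constructor
      · rintro ⟨-, h | h⟩
        · exact Or.inl ⟨h.1, h.2⟩
        · exact Or.inr ⟨h.1, h.2⟩
      · rintro (⟨rfl, rfl⟩ | ⟨rfl, rfl⟩)
        · exact ⟨hadj, Or.inl ⟨rfl, rfl⟩⟩
        · exact ⟨hadj.symm, Or.inr ⟨rfl, rfl⟩⟩
    rw [hset, Finset.sum_pair (by simp [hne])]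
    simp [hf u v, two_mul]

end Aux


section DegFacts

variable {t q s : ℕ} (k : Fin t → ℕ)

lemma aux_degH1 (hk : ∀ i, 3 ≤ k i) (a : Σ i, Fin (k i))
    (inst : Fintype ((sigmaGraph fun i => cycleGraph (k i)).neighborSet a)) :
    @SimpleGraph.degree _ (sigmaGraph fun i => cycleGraph (k i)) a inst = 2 := by
  letI := Classical.decRel (sigmaGraph fun i => cycleGraph (k i)).Adj
  obtain ⟨i, j⟩ := a
  rw [Subsingleton.elim inst (SimpleGraph.neighborSetFintype _ _)]
  rw [degree_sigmaGraph, degree_cycleGraph' (hk i)]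

lemma aux_degK2 (b : Σ _ : Fin q, Fin 2) (inst : Fintype ((K2s q).neighborSet b)) :
    @SimpleGraph.degree _ (K2s q) b inst = 1 := by
  obtain ⟨i, j⟩ := b
  letI := Classical.decRel (sigmaGraph fun _ : Fin q => (⊤ : SimpleGraph (Fin 2))).Adj
  have h : ∀ inst2 : Fintype ((sigmaGraph fun _ : Fin q =>
      (⊤ : SimpleGraph (Fin 2))).neighborSet ⟨i, j⟩),
      @SimpleGraph.degree _ (sigmaGraph fun _ : Fin q => (⊤ : SimpleGraph (Fin 2)))
        ⟨i, j⟩ inst2 = 1 := by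
    intro inst2
    rw [Subsingleton.elim inst2 (SimpleGraph.neighborSetFintype _ _), degree_sigmaGraph]
    simp
  exact h inst

lemma aux_deg_none
    (inst : Fintype ((cone ((sigmaGraph fun i => cycleGraph (k i)) ⊕g (K2s q ⊕g (⊥ : SimpleGraph (Fin s))))).neighborSet none)) :
    @SimpleGraph.degree _ (cone ((sigmaGraph fun i => cycleGraph (k i)) ⊕g (K2s q ⊕g (⊥ : SimpleGraph (Fin s))))) none inst
      = Fintype.card ((Σ i, Fin (k i)) ⊕ ((Σ _ : Fin q, Fin 2) ⊕ Fin s)) := by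
  letI := Classical.decRel (cone ((sigmaGraph fun i => cycleGraph (k i)) ⊕g (K2s q ⊕g (⊥ : SimpleGraph (Fin s))))).Adj
  rw [Subsingleton.elim inst (SimpleGraph.neighborSetFintype _ _)]
  rw [degree_cone_none]

lemma aux_deg_inl (hk : ∀ i, 3 ≤ k i) (a : Σ i, Fin (k i))
    (inst : Fintype ((cone ((sigmaGraph fun i => cycleGraph (k i)) ⊕g (K2s q ⊕g (⊥ : SimpleGraph (Fin s))))).neighborSet (some (Sum.inl a)))) :
    @SimpleGraph.degree _ (cone ((sigmaGraph fun i => cycleGraph (k i)) ⊕g (K2s q ⊕g (⊥ : SimpleGraph (Fin s))))) (some (Sum.inl a)) inst = 3 := by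
  letI := Classical.decRel (sigmaGraph fun i => cycleGraph (k i)).Adj
  letI := Classical.decRel ((sigmaGraph fun i => cycleGraph (k i)) ⊕g (K2s q ⊕g (⊥ : SimpleGraph (Fin s)))).Adj
  letI := Classical.decRel (cone ((sigmaGraph fun i => cycleGraph (k i)) ⊕g (K2s q ⊕g (⊥ : SimpleGraph (Fin s))))).Adj
  rw [Subsingleton.elim inst (SimpleGraph.neighborSetFintype _ _)]
  rw [degree_cone_some, degree_sum_inl, aux_degH1 k hk a _]

lemma aux_deg_inr_inl (b : Σ _ : Fin q, Fin 2)
    (inst : Fintype ((cone ((sigmaGraph fun i => cycleGraph (k i)) ⊕g (K2s q ⊕g (⊥ : SimpleGraph (Fin s))))).neighborSet (some (Sum.inr (Sum.inl b))))) :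
    @SimpleGraph.degree _ (cone ((sigmaGraph fun i => cycleGraph (k i)) ⊕g (K2s q ⊕g (⊥ : SimpleGraph (Fin s))))) (some (Sum.inr (Sum.inl b))) inst = 2 := by
  letI := Classical.decRel (K2s q).Adj
  letI := Classical.decRel (K2s q ⊕g (⊥ : SimpleGraph (Fin s))).Adj
  letI := Classical.decRel ((sigmaGraph fun i => cycleGraph (k i)) ⊕g (K2s q ⊕g (⊥ : SimpleGraph (Fin s)))).Adj
  letI := Classical.decRel (cone ((sigmaGraph fun i => cycleGraph (k i)) ⊕g (K2s q ⊕g (⊥ : SimpleGraph (Fin s))))).Adj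
  rw [Subsingleton.elim inst (SimpleGraph.neighborSetFintype _ _)]
  rw [degree_cone_some, degree_sum_inr, degree_sum_inl, aux_degK2 b _]

lemma aux_deg_inr_inr (c : Fin s)
    (inst : Fintype ((cone ((sigmaGraph fun i => cycleGraph (k i)) ⊕g (K2s q ⊕g (⊥ : SimpleGraph (Fin s))))).neighborSet (some (Sum.inr (Sum.inr c))))) :
    @SimpleGraph.degree _ (cone ((sigmaGraph fun i => cycleGraph (k i)) ⊕g (K2s q ⊕g (⊥ : SimpleGraph (Fin s))))) (some (Sum.inr (Sum.inr c))) inst = 1 := by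
  letI := Classical.decRel (K2s q ⊕g (⊥ : SimpleGraph (Fin s))).Adj
  letI := Classical.decRel ((sigmaGraph fun i => cycleGraph (k i)) ⊕g (K2s q ⊕g (⊥ : SimpleGraph (Fin s)))).Adj
  letI := Classical.decRel (cone ((sigmaGraph fun i => cycleGraph (k i)) ⊕g (K2s q ⊕g (⊥ : SimpleGraph (Fin s))))).Adj
  rw [Subsingleton.elim inst (SimpleGraph.neighborSetFintype _ _)]
  rw [degree_cone_some, degree_sum_inr, degree_sum_inr, SimpleGraph.bot_degree]

end DegFacts

/-- Lemma 4.2 (iv): for `G = K₁ ∨ (C_{k₁} ∪ ⋯ ∪ C_{k_t} ∪ q K₂ ∪ s K₁)` of order `n`,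
`∑_{uv ∈ E(G)} d_G(u) d_G(v) = 3(n+2)(n-1-2q) + 4qn - s(2n+7)`. -/
theorem edge_degree_product_sum_coneCycles
    (t q s n : ℕ) (ht : 1 ≤ t) (hq : 1 ≤ q) (hs : 1 ≤ s)
    (k : Fin t → ℕ) (hk : ∀ i, 3 ≤ k i)
    (hn : n = Fintype.card (Option ((Σ i, Fin (k i)) ⊕ ((Σ _ : Fin q, Fin 2) ⊕ Fin s)))) :
    (edgeDegSum (coneCycles k q s) : ℤ) =
      3 * ((n : ℤ) + 2) * ((n : ℤ) - 1 - 2 * (q : ℤ)) + 4 * (q : ℤ) * (n : ℤ)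
        - (s : ℤ) * (2 * (n : ℤ) + 7) := by
  letI dH1 : DecidableRel (sigmaGraph fun i => cycleGraph (k i)).Adj := Classical.decRel _
  letI dK : DecidableRel (K2s q).Adj := Classical.decRel _
  letI dB2 : DecidableRel (K2s q ⊕g (⊥ : SimpleGraph (Fin s))).Adj := Classical.decRel _
  letI dH : DecidableRel ((sigmaGraph fun i => cycleGraph (k i)) ⊕g (K2s q ⊕g (⊥ : SimpleGraph (Fin s)))).Adj := Classical.decRel _
  letI dG : DecidableRel (cone ((sigmaGraph fun i => cycleGraph (k i)) ⊕g (K2s q ⊕g (⊥ : SimpleGraph (Fin s))))).Adj := Classical.decRel _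
  set K := ∑ i, k i with hKdef
  set M := K + 2 * q + s with hM
  have hcA : Fintype.card (Σ i, Fin (k i)) = K := by simp [Fintype.card_sigma, hKdef]
  have hcB : Fintype.card (Σ _ : Fin q, Fin 2) = 2 * q := by
    simp [Fintype.card_sigma, Finset.sum_const, Nat.mul_comm]
  have hcAll : Fintype.card ((Σ i, Fin (k i)) ⊕ ((Σ _ : Fin q, Fin 2) ⊕ Fin s)) = M := by
    simp [Fintype.card_sum, hcA, hcB, hM]
    omega
  have hE : 2 * edgeDegSum (coneCycles k q s) =
      M * (3 * K) + M * (2 * q * 2) + M * (s * 1)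
        + K * (3 * M + 18) + 2 * q * (2 * M + 4) + s * (1 * M) := by
    have hGC : coneCycles k q s = cone ((sigmaGraph fun i => cycleGraph (k i)) ⊕g (K2s q ⊕g (⊥ : SimpleGraph (Fin s)))) := rfl
    unfold edgeDegSum
    rw [← double_count]
    rw [hGC]
    have blockNone : (∑ v : Option ((Σ i, Fin (k i)) ⊕ ((Σ _ : Fin q, Fin 2) ⊕ Fin s)),
        if (cone ((sigmaGraph fun i => cycleGraph (k i)) ⊕g (K2s q ⊕g (⊥ : SimpleGraph (Fin s))))).Adj none v then
          (cone ((sigmaGraph fun i => cycleGraph (k i)) ⊕g (K2s q ⊕g (⊥ : SimpleGraph (Fin s))))).degree none * (cone ((sigmaGraph fun i => cycleGraph (k i)) ⊕g (K2s q ⊕g (⊥ : SimpleGraph (Fin s))))).degree v else 0)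
        = M * (3 * K) + M * (2 * q * 2) + M * (s * 1) := by
      rw [Fintype.sum_option, Fintype.sum_sum_type, Fintype.sum_sum_type]
      simp only [cone_adj_none_none, cone_adj_none_some, if_true, if_false,
        aux_deg_none k, aux_deg_inl k hk, aux_deg_inr_inl k, aux_deg_inr_inr k, hcAll,
        Finset.sum_const, Finset.card_univ, smul_eq_mul, hcA, hcB, Fintype.card_fin,
        ite_true, ite_false]
      ring
    have blockA : ∀ a : Σ i, Fin (k i),
        (∑ v : Option ((Σ i, Fin (k i)) ⊕ ((Σ _ : Fin q, Fin 2) ⊕ Fin s)),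
          if (cone ((sigmaGraph fun i => cycleGraph (k i)) ⊕g (K2s q ⊕g (⊥ : SimpleGraph (Fin s))))).Adj (some (Sum.inl a)) v then
            (cone ((sigmaGraph fun i => cycleGraph (k i)) ⊕g (K2s q ⊕g (⊥ : SimpleGraph (Fin s))))).degree (some (Sum.inl a)) * (cone ((sigmaGraph fun i => cycleGraph (k i)) ⊕g (K2s q ⊕g (⊥ : SimpleGraph (Fin s))))).degree v else 0)
        = 3 * M + 18 := by
      intro a
      rw [Fintype.sum_option, Fintype.sum_sum_type]
      simp only [cone_adj_some_none, cone_adj_some_some, sum_adj_inl_inl, sum_adj_inl_inr,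
        if_true, if_false, ite_true, ite_false,
        aux_deg_none k, aux_deg_inl k hk, hcAll,
        Finset.sum_const_zero, add_zero, if_neg, iff_false]
      rw [sum_ite_adj_const]
      rw [aux_degH1 k hk a]
    have blockB : ∀ b : Σ _ : Fin q, Fin 2,
        (∑ v : Option ((Σ i, Fin (k i)) ⊕ ((Σ _ : Fin q, Fin 2) ⊕ Fin s)),
          if (cone ((sigmaGraph fun i => cycleGraph (k i)) ⊕g (K2s q ⊕g (⊥ : SimpleGraph (Fin s))))).Adj (some (Sum.inr (Sum.inl b))) v then
            (cone ((sigmaGraph fun i => cycleGraph (k i)) ⊕g (K2s q ⊕g (⊥ : SimpleGraph (Fin s))))).degree (some (Sum.inr (Sum.inl b))) * (cone ((sigmaGraph fun i => cycleGraph (k i)) ⊕g (K2s q ⊕g (⊥ : SimpleGraph (Fin s))))).degree v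
          else 0)
        = 2 * M + 4 := by
      intro b
      rw [Fintype.sum_option, Fintype.sum_sum_type, Fintype.sum_sum_type]
      simp only [cone_adj_some_none, cone_adj_some_some, sum_adj_inr_inl, sum_adj_inr_inr,
        sum_adj_inl_inl, sum_adj_inl_inr, if_true, if_false, ite_true, ite_false,
        aux_deg_none k, aux_deg_inr_inl k, hcAll,
        Finset.sum_const_zero, add_zero, zero_add, if_neg, iff_false]
      rw [sum_ite_adj_const]
      rw [aux_degK2 b]
    have blockC : ∀ c : Fin s,
        (∑ v : Option ((Σ i, Fin (k i)) ⊕ ((Σ _ : Fin q, Fin 2) ⊕ Fin s)),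
          if (cone ((sigmaGraph fun i => cycleGraph (k i)) ⊕g (K2s q ⊕g (⊥ : SimpleGraph (Fin s))))).Adj (some (Sum.inr (Sum.inr c))) v then
            (cone ((sigmaGraph fun i => cycleGraph (k i)) ⊕g (K2s q ⊕g (⊥ : SimpleGraph (Fin s))))).degree (some (Sum.inr (Sum.inr c))) * (cone ((sigmaGraph fun i => cycleGraph (k i)) ⊕g (K2s q ⊕g (⊥ : SimpleGraph (Fin s))))).degree v
          else 0)
        = 1 * M := by
      intro c
      rw [Fintype.sum_option, Fintype.sum_sum_type, Fintype.sum_sum_type]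
      simp only [cone_adj_some_none, cone_adj_some_some, sum_adj_inr_inl, sum_adj_inr_inr,
        sum_adj_inl_inr, SimpleGraph.bot_adj, if_true, if_false, ite_true, ite_false,
        aux_deg_none k, aux_deg_inr_inr k, hcAll,
        Finset.sum_const_zero, add_zero, if_neg, iff_false]
    rw [Fintype.sum_option, Fintype.sum_sum_type, Fintype.sum_sum_type, blockNone,
      Finset.sum_congr rfl (fun a _ => blockA a),
      Finset.sum_congr rfl (fun b _ => blockB b),
      Finset.sum_congr rfl (fun c _ => blockC c),
      Finset.sum_const, Finset.sum_const, Finset.sum_const]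
    simp only [Finset.card_univ, smul_eq_mul, hcA, hcB, Fintype.card_fin]
    ring

  have hn' : (n : ℤ) = (K : ℤ) + 2 * (q : ℤ) + (s : ℤ) + 1 := by
    rw [hn]
    push_cast [Fintype.card_option, hcAll, hM]
    ring
  have hE' : 2 * (edgeDegSum (coneCycles k q s) : ℤ) =
      (M : ℤ) * (3 * K) + M * (2 * q * 2) + M * (s * 1)
        + K * (3 * M + 18) + 2 * q * (2 * M + 4) + s * (1 * M) := by
    exact_mod_cast hE
  have hM' : (M : ℤ) = (K : ℤ) + 2 * q + s := by exact_mod_cast congrArg (Nat.cast : ℕ → ℤ) hM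
  apply mul_left_cancel₀ (a := (2 : ℤ)) two_ne_zero
  rw [hE', hn', hM']
  ring

end Paper
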